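/- arXiv:2110.10885 — 2 statements merged into one kernel-verified Lean document; each statement's English description precedes it below -/
import Mathlib

section
/- With notation as above, the quotient H_k / Q_k is isomorphic to (Z^k + Z_k)/(Z^k + B_k), where Q_k is the subspace of homology classes with a harmonic representative. In particular the codimension of Q_k in H_k equals dim(Z^k + Z_k) − dim(Z^k + B_k). -/
open Matrix

set_option maxHeartbeats 1000000 in
set_option synthInstance.maxHeartbeats 400000 in
/-- `H_k/Q_k ≅ (Z^k + Z_k)/(Z^k + B_k)`, and the codimension of `Q_k`
in `H_k` is `dim(Z^k + Z_k) − dim(Z^k + B_k)`. -/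
theorem stmt_8 {F : Type*} [Field F] {nkm1 nk nk1 : ℕ}
    (Dk : Matrix (Fin nkm1) (Fin nk) F) (Dk1 : Matrix (Fin nk) (Fin nk1) F)
    (hchain : Dk * Dk1 = 0)
    (Z : Submodule F (Fin nk → F)) (hZ : Z = LinearMap.ker Dk.mulVecLin)
    (B : Submodule F (Fin nk → F)) (hB : B = LinearMap.range Dk1.mulVecLin)
    (Zco : Submodule F (Fin nk → F)) (hZco : Zco = LinearMap.ker Dk1ᵀ.mulVecLin)
    (Q : Submodule F (↥Z ⧸ B.comap Z.subtype))
    (hQ : Q = Submodule.map (B.comap Z.subtype).mkQ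
        ((Z ⊓ (Zco ⊔ B)).comap Z.subtype)) :
    Nonempty (((↥Z ⧸ B.comap Z.subtype) ⧸ Q) ≃ₗ[F]
        (↥(Zco ⊔ Z) ⧸ ((Zco ⊔ B).comap (Zco ⊔ Z).subtype))) ∧
      Module.finrank F ((↥Z ⧸ B.comap Z.subtype) ⧸ Q) =
        Module.finrank F ↥(Zco ⊔ Z) - Module.finrank F ↥(Zco ⊔ B) := by
  have hBZ : B ≤ Z := by
    rw [hB, hZ]
    rintro x ⟨y, rfl⟩
    simp only [LinearMap.mem_ker, Matrix.mulVecLin_apply]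
    rw [Matrix.mulVec_mulVec, hchain, Matrix.zero_mulVec]
  clear hZ hB hZco hchain
  subst hQ
  have hST : B ≤ Z ⊓ (Zco ⊔ B) := le_inf hBZ le_sup_right
  -- third isomorphism theorem
  let e1 := Submodule.quotientQuotientEquivQuotient (B.comap Z.subtype)
    ((Z ⊓ (Zco ⊔ B)).comap Z.subtype) (Submodule.comap_mono hST)
  -- second isomorphism theorem
  have hinf : (Z ⊓ (Zco ⊔ B)).comap Z.subtype
      = Submodule.comap Z.subtype (Z ⊓ (Zco ⊔ B)) := rfl
  let e2 := LinearMap.quotientInfEquivSupQuotient Z (Zco ⊔ B)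
  have hsup : Z ⊔ (Zco ⊔ B) = Zco ⊔ Z := by
    rw [sup_comm Zco B, ← sup_assoc, sup_eq_left.2 hBZ, sup_comm]
  rw [← hsup]
  have e : ((↥Z ⧸ B.comap Z.subtype) ⧸
      Submodule.map (B.comap Z.subtype).mkQ ((Z ⊓ (Zco ⊔ B)).comap Z.subtype)) ≃ₗ[F]
      (↥(Z ⊔ (Zco ⊔ B)) ⧸ ((Zco ⊔ B).comap (Z ⊔ (Zco ⊔ B)).subtype)) :=
    e1.trans e2
  refine ⟨⟨e⟩, ?_⟩
  rw [e.finrank_eq]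
  have h1 := Submodule.finrank_quotient_add_finrank
    ((Zco ⊔ B).comap (Z ⊔ (Zco ⊔ B)).subtype)
  have h2 : Module.finrank F ↥((Zco ⊔ B).comap (Z ⊔ (Zco ⊔ B)).subtype)
      = Module.finrank F ↥(Zco ⊔ B) :=
    (Submodule.comapSubtypeEquivOfLe (le_sup_right : Zco ⊔ B ≤ Z ⊔ (Zco ⊔ B))).finrank_eq
  omega
end

section
/- Let C_• be a chain complex of finite-dimensional F-vector spaces with adjoint differentials satisfying ker(∂_k*∂_k) = ker(∂_k) and ker(∂_{k+1}∂_{k+1}*) = ker(∂_{k+1}*), and suppose B_k ∩ B^k = 0. Then ker(L_k) = Z_k ∩ Z^k, where L_k = ∂_{k+1}∂_{k+1}* + ∂_k*∂_k. -/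
open Matrix

/-- if `ker(∂_k*∂_k) = ker(∂_k)`, `ker(∂_{k+1}∂_{k+1}*) = ker(∂_{k+1}*)`,
and `B_k ∩ B^k = 0`, then `ker(L_k) = Z_k ∩ Z^k`. -/
theorem stmt_16 {F : Type*} [Field F] {nkm1 nk nk1 : ℕ}
    (Dk : Matrix (Fin nkm1) (Fin nk) F) (Dk1 : Matrix (Fin nk) (Fin nk1) F)
    (hchain : Dk * Dk1 = 0)
    (h1 : LinearMap.ker (Dkᵀ * Dk).mulVecLin = LinearMap.ker Dk.mulVecLin)
    (h2 : LinearMap.ker (Dk1 * Dk1ᵀ).mulVecLin = LinearMap.ker Dk1ᵀ.mulVecLin)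
    (h3 : LinearMap.range Dk1.mulVecLin ⊓ LinearMap.range Dkᵀ.mulVecLin = ⊥) :
    LinearMap.ker (Dk1 * Dk1ᵀ + Dkᵀ * Dk).mulVecLin =
      LinearMap.ker Dk.mulVecLin ⊓ LinearMap.ker Dk1ᵀ.mulVecLin := by
  ext x
  simp only [LinearMap.mem_ker, Submodule.mem_inf, mulVecLin_apply, add_mulVec,
    ← mulVec_mulVec]
  constructor
  · intro h
    have hmem : Dkᵀ.mulVec (Dk.mulVec x) ∈
        LinearMap.range Dk1.mulVecLin ⊓ LinearMap.range Dkᵀ.mulVecLin := by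
      constructor
      · exact ⟨-(Dk1ᵀ.mulVec x), by
          simp only [mulVecLin_apply, mulVec_neg]
          rw [neg_eq_iff_add_eq_zero]; exact h⟩
      · exact ⟨Dk.mulVec x, rfl⟩
    rw [h3, Submodule.mem_bot] at hmem
    have hk : Dk.mulVec x = 0 := by
      have : x ∈ LinearMap.ker (Dkᵀ * Dk).mulVecLin := by
        simpa only [LinearMap.mem_ker, mulVecLin_apply, ← mulVec_mulVec] using hmem
      rw [h1] at this; simpa only [LinearMap.mem_ker, mulVecLin_apply] using this
    refine ⟨hk, ?_⟩
    have h2' : Dk1.mulVec (Dk1ᵀ.mulVec x) = 0 := by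
      have := h; rw [hmem, add_zero] at this; exact this
    have : x ∈ LinearMap.ker (Dk1 * Dk1ᵀ).mulVecLin := by
      simpa only [LinearMap.mem_ker, mulVecLin_apply, ← mulVec_mulVec] using h2'
    rw [h2] at this; simpa only [LinearMap.mem_ker, mulVecLin_apply] using this
  · rintro ⟨ha, hb⟩
    rw [ha, hb]
    simp
end
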